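/- Consider the QCQP data n, m ∈ ℕ with n ≥ 1, vectors a⁰, a¹, …, aᵐ ∈ ℝⁿ, c^{x,0}, …, c^{x,m} ∈ ℝⁿ, c^{y,0}, …, c^{y,m} ∈ ℝⁿ, and b ∈ ℝᵐ. Let F_Mc be the set of tuples (x, y, u, w) ∈ ℝⁿ × ℝⁿ × ℝ^{2n} × ℝ^{2n×2n} such that: x_i = u_i and y_i = u_{n+i} for all i ∈ [n]; u ∈ [0,1]^{2n}; max{u_i + u_k − 1, 0} ≤ w_{ik} ≤ min{u_i, u_k} for all (i,k) ∈ [2n] × [2n]; and ∑_{i∈[n]} a^j_i w_{i, n+i} + ∑_{i∈[n]} c^{x,j}_i x_i + ∑_{i∈[n]} c^{y,j}_i y_i ≥ b_j for all j ∈ [m]. Let F_MS be the subset of F_Mc consisting of tuples for which additionally the (2n+1) × (2n+1) block matrix W = [[1, uᵀ],[u, w]] is positive semidefinite. Then for every (x, y, u, w) ∈ F_Mc there exists w' ∈ ℝ^{2n×2n} such that (x, y, u, w') ∈ F_MS and w'_{i, n+i} = w_{i, n+i} for all i ∈ [n]. -/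

import Mathlib

set_option maxHeartbeats 1000000

open Matrix

lemma quad2 {A B C z₁ z₂ : ℝ} (hA : 0 ≤ A) (hB : 0 ≤ B) (hC : C * C ≤ A * B) :
    0 ≤ z₁ * (A * z₁ + C * z₂) + z₂ * (C * z₁ + B * z₂) := by
  rcases eq_or_lt_of_le hA with h | h
  · have hC0 : C = 0 := by nlinarith [sq_nonneg C]
    subst hC0
    rw [← h]
    nlinarith [mul_nonneg hB (sq_nonneg z₂)]
  · nlinarith [sq_nonneg (A * z₁ + C * z₂), mul_nonneg (sub_nonneg.2 hC) (sq_nonneg z₂)]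

lemma csq {p q ww : ℝ} (hp0 : 0 ≤ p) (hp1 : p ≤ 1) (hq0 : 0 ≤ q) (hq1 : q ≤ 1)
    (h1 : p + q - 1 ≤ ww) (h2 : 0 ≤ ww) (h3 : ww ≤ p) (h4 : ww ≤ q) :
    (ww - p * q) * (ww - p * q) ≤ (p - p * p) * (q - q * q) := by
  nlinarith [mul_nonneg (sub_nonneg.2 h3) (sub_nonneg.2 h4),
    mul_nonneg h2 (by linarith : (0:ℝ) ≤ 1 - p - q + ww),
    mul_nonneg (sub_nonneg.2 h3) (by linarith : (0:ℝ) ≤ 1 - p - q + ww),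
    mul_nonneg h2 (sub_nonneg.2 h4)]

lemma psd_vecMulVec {ι : Type*} [Fintype ι] (a : ι → ℝ) :
    (Matrix.vecMulVec a a).PosSemidef := by
  refine Matrix.PosSemidef.of_dotProduct_mulVec_nonneg ?_ ?_
  · ext i j
    simp [Matrix.vecMulVec, Matrix.conjTranspose_apply, mul_comm]
  · intro v
    have h : star v ⬝ᵥ (Matrix.vecMulVec a a) *ᵥ v = (∑ j, a j * v j) ^ 2 := by
      simp only [star_trivial, dotProduct, Matrix.mulVec, Matrix.vecMulVec_apply, sq,
        Finset.sum_mul_sum]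
      apply Finset.sum_congr rfl; intro i _
      rw [Finset.mul_sum]
      apply Finset.sum_congr rfl; intro j _
      ring
    rw [h]
    positivity



/-- Any point of the McCormick relaxation F_Mc can be extended to a
point of the McCormick+SDP relaxation F_MS keeping the entries w_{i,n+i} fixed.
Indices [2n] are encoded as `Fin n ⊕ Fin n` (i ↦ `Sum.inl i`, n+i ↦ `Sum.inr i`)
and the extra index 0 of the moment matrix as `none` in `Option (Fin n ⊕ Fin n)`. -/
theorem stmt_11 (n m : ℕ) (hn : 1 ≤ n)
    (a cx cy : Fin m → Fin n → ℝ) (b : Fin m → ℝ)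
    (x y : Fin n → ℝ) (u : Fin n ⊕ Fin n → ℝ)
    (w : Matrix (Fin n ⊕ Fin n) (Fin n ⊕ Fin n) ℝ)
    -- (x, y, u, w) ∈ F_Mc :
    (hxu : ∀ i, x i = u (Sum.inl i)) (hyu : ∀ i, y i = u (Sum.inr i))
    (hu : ∀ i, u i ∈ Set.Icc (0 : ℝ) 1)
    (hw : ∀ i k, max (u i + u k - 1) 0 ≤ w i k ∧ w i k ≤ min (u i) (u k))
    (hlin : ∀ j, b j ≤ ∑ i, a j i * w (Sum.inl i) (Sum.inr i)
                        + ∑ i, cx j i * x i + ∑ i, cy j i * y i) :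
    -- there is w' with (x, y, u, w') ∈ F_MS and w'_{i,n+i} = w_{i,n+i} :
    ∃ w' : Matrix (Fin n ⊕ Fin n) (Fin n ⊕ Fin n) ℝ,
      (∀ i k, max (u i + u k - 1) 0 ≤ w' i k ∧ w' i k ≤ min (u i) (u k)) ∧
      (∀ j, b j ≤ ∑ i, a j i * w' (Sum.inl i) (Sum.inr i)
                  + ∑ i, cx j i * x i + ∑ i, cy j i * y i) ∧
      Matrix.PosSemidef (Matrix.of fun i j : Option (Fin n ⊕ Fin n) =>
        match i, j with
        | none, none => (1 : ℝ)
        | none, some l => u l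
        | some k, none => u k
        | some k, some l => w' k l) ∧
      (∀ i, w' (Sum.inl i) (Sum.inr i) = w (Sum.inl i) (Sum.inr i)) := by
  classical
  set d : Matrix (Fin n ⊕ Fin n) (Fin n ⊕ Fin n) ℝ := fun k l =>
    match k, l with
    | Sum.inl i, Sum.inl j => if i = j then u (Sum.inl i) - u (Sum.inl i) * u (Sum.inl i) else 0
    | Sum.inl i, Sum.inr j => if i = j then w (Sum.inl i) (Sum.inr i) - u (Sum.inl i) * u (Sum.inr i) else 0
    | Sum.inr i, Sum.inl j => if i = j then w (Sum.inl i) (Sum.inr i) - u (Sum.inl i) * u (Sum.inr i) else 0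
    | Sum.inr i, Sum.inr j => if i = j then u (Sum.inr i) - u (Sum.inr i) * u (Sum.inr i) else 0
    with hd
  have h1 : ∀ i : Fin n, u (Sum.inl i) + u (Sum.inr i) - 1 ≤ w (Sum.inl i) (Sum.inr i) :=
    fun i => le_trans (le_max_left _ _) (hw _ _).1
  have h2 : ∀ i : Fin n, 0 ≤ w (Sum.inl i) (Sum.inr i) :=
    fun i => le_trans (le_max_right _ _) (hw _ _).1
  have h3 : ∀ i : Fin n, w (Sum.inl i) (Sum.inr i) ≤ u (Sum.inl i) :=
    fun i => le_trans (hw _ _).2 (min_le_left _ _)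
  have h4 : ∀ i : Fin n, w (Sum.inl i) (Sum.inr i) ≤ u (Sum.inr i) :=
    fun i => le_trans (hw _ _).2 (min_le_right _ _)
  have hfix : ∀ i : Fin n,
      u (Sum.inl i) * u (Sum.inr i) + d (Sum.inl i) (Sum.inr i) = w (Sum.inl i) (Sum.inr i) := by
    intro i
    simp only [hd, eq_self_iff_true, if_true, ite_true]
    ring
  refine ⟨fun k l => u k * u l + d k l, ?_, ?_, ?_, hfix⟩
  · -- McCormick bounds
    intro k l
    have hk := hu k; have hl := hu l
    simp only [Set.mem_Icc] at hk hl
    rcases k with i | i <;> rcases l with j | j <;> by_cases hij : i = j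
    all_goals try subst hij
    all_goals simp only [hd]
    all_goals try simp only [hij]
    all_goals simp only [eq_self_iff_true, if_true, if_false, ite_true, ite_false,
      max_le_iff, le_min_iff]
    all_goals refine ⟨⟨?_, ?_⟩, ?_, ?_⟩
    all_goals nlinarith [h1 i, h2 i, h3 i, h4 i, hk.1, hk.2, hl.1, hl.2,
      mul_nonneg hk.1 hl.1, mul_nonneg (sub_nonneg.2 hk.2) (sub_nonneg.2 hl.2),
      mul_nonneg hk.1 (sub_nonneg.2 hl.2), mul_nonneg (sub_nonneg.2 hk.2) hl.1]
  · -- linear constraints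
    intro j
    refine le_trans (hlin j) (le_of_eq ?_)
    congr 1
    congr 1
    exact Finset.sum_congr rfl fun i _ => by simp only [hfix i]
  · -- PSD
    set v : Option (Fin n ⊕ Fin n) → ℝ := fun o => o.elim 1 u with hv
    set D : Matrix (Option (Fin n ⊕ Fin n)) (Option (Fin n ⊕ Fin n)) ℝ := fun i j =>
      match i, j with
      | some k, some l => d k l
      | _, _ => 0
      with hD
    have hdsymm : ∀ k l, d k l = d l k := by
      intro k l
      rcases k with i | i <;> rcases l with j | j <;> by_cases hij : i = j
      all_goals try subst hij
      all_goals simp only [hd]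
      all_goals try simp only [hij, Ne.symm hij]
      all_goals simp
    have hM : (Matrix.of fun i j : Option (Fin n ⊕ Fin n) =>
        match i, j with
        | none, none => (1 : ℝ)
        | none, some l => u l
        | some k, none => u k
        | some k, some l => (fun k l => u k * u l + d k l) k l) =
        Matrix.vecMulVec v v + D := by
      ext i j
      rcases i with _ | k <;> rcases j with _ | l <;>
        (simp only [Matrix.add_apply]; simp [hv, hD, Matrix.vecMulVec_apply, Matrix.add_apply])
    rw [hM]
    refine (psd_vecMulVec v).add ?_
    refine Matrix.PosSemidef.of_dotProduct_mulVec_nonneg ?_ ?_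
    · ext i j
      rcases i with _ | k <;> rcases j with _ | l <;>
        (simp only [Matrix.conjTranspose_apply]; simp [hD, Matrix.conjTranspose_apply, hdsymm])
    · intro xv
      have hcalc : star xv ⬝ᵥ D *ᵥ xv = ∑ i : Fin n,
          (xv (some (Sum.inl i)) *
            ((u (Sum.inl i) - u (Sum.inl i) * u (Sum.inl i)) * xv (some (Sum.inl i)) +
             (w (Sum.inl i) (Sum.inr i) - u (Sum.inl i) * u (Sum.inr i)) * xv (some (Sum.inr i))) +
           xv (some (Sum.inr i)) *
            ((w (Sum.inl i) (Sum.inr i) - u (Sum.inl i) * u (Sum.inr i)) * xv (some (Sum.inl i)) +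
             (u (Sum.inr i) - u (Sum.inr i) * u (Sum.inr i)) * xv (some (Sum.inr i)))) := by
        simp only [star_trivial, dotProduct, Matrix.mulVec, hD, Fintype.sum_option,
          Fintype.sum_sum_type, hd, ite_mul, mul_ite, zero_mul, mul_zero,
          Finset.sum_ite_eq, Finset.mem_univ, if_true, Finset.sum_const_zero, mul_zero,
          zero_add, add_zero]
        rw [← Finset.sum_add_distrib]
      rw [hcalc]
      apply Finset.sum_nonneg
      intro i _
      have hpi := hu (Sum.inl i); have hqi := hu (Sum.inr i)
      simp only [Set.mem_Icc] at hpi hqi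
      refine quad2 ?_ ?_ ?_
      · nlinarith [hpi.1, hpi.2]
      · nlinarith [hqi.1, hqi.2]
      · exact csq hpi.1 hpi.2 hqi.1 hqi.2 (h1 i) (h2 i) (h3 i) (h4 i)
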